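/- arXiv:2503.00255 — 9 statements merged into one kernel-verified Lean document; each statement's English description precedes it below -/
import Mathlib

section
/- Let ι be a finite type and f : ι → ℝ. (1) For every p : ι → ℝ with p i ≥ 0 for all i and Σᵢ p i = 1, and every w : ι → ℝ such that p i * w i = f i for all i, one has (Σᵢ |f i|)² ≤ Σᵢ p i * (w i)². (2) Moreover, if f is not identically zero, then setting F = Σⱼ |f j|, p i = |f i| / F and w i = sign(f i) · F, one has p i ≥ 0, Σᵢ p i = 1, p i * w i = f i for all i, and Σᵢ p i * (w i)² = F². -/
open Finset

lemma sign_mul_abs' (x : ℝ) : Real.sign x * |x| = x := by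
  rcases lt_trichotomy x 0 with h | h | h
  · rw [Real.sign_of_neg h, abs_of_neg h]; ring
  · simp [h]
  · rw [Real.sign_of_pos h, abs_of_pos h]; ring

lemma abs_mul_sign_sq (x : ℝ) : |x| * (Real.sign x) ^ 2 = |x| := by
  rcases lt_trichotomy x 0 with h | h | h
  · rw [Real.sign_of_neg h]; ring
  · simp [h]
  · rw [Real.sign_of_pos h]; ring

/-- Optimality of the importance-sampling distribution `p i ∝ |f i|` for
generalized direct fidelity estimation: (1) any valid sampling scheme has
second moment at least `(∑ i, |f i|)²`; (2) the choice `p i = |f i| / F`,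
`w i = sign (f i) · F` with `F = ∑ j, |f j|` is valid and attains it. -/
theorem stmt1 {ι : Type*} [Fintype ι] (f : ι → ℝ) :
    (∀ p w : ι → ℝ, (∀ i, 0 ≤ p i) → (∑ i, p i) = 1 →
      (∀ i, p i * w i = f i) →
      (∑ i, |f i|) ^ 2 ≤ ∑ i, p i * (w i) ^ 2) ∧
    (f ≠ 0 →
      (∀ i, 0 ≤ |f i| / (∑ j, |f j|)) ∧
      (∑ i, |f i| / (∑ j, |f j|)) = 1 ∧
      (∀ i, (|f i| / (∑ j, |f j|)) * (Real.sign (f i) * (∑ j, |f j|)) = f i) ∧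
      (∑ i, (|f i| / (∑ j, |f j|)) * (Real.sign (f i) * (∑ j, |f j|)) ^ 2)
        = (∑ j, |f j|) ^ 2) := by
  constructor
  · intro p w hp hsum hpw
    have key : ∀ i, |f i| = Real.sqrt (p i) * (Real.sqrt (p i) * |w i|) := by
      intro i
      rw [← mul_assoc, Real.mul_self_sqrt (hp i), ← hpw i, abs_mul, abs_of_nonneg (hp i)]
    calc (∑ i, |f i|) ^ 2
        = (∑ i, Real.sqrt (p i) * (Real.sqrt (p i) * |w i|)) ^ 2 := by
          simp_rw [← key]
      _ ≤ (∑ i, Real.sqrt (p i) ^ 2) * ∑ i, (Real.sqrt (p i) * |w i|) ^ 2 :=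
          sum_mul_sq_le_sq_mul_sq _ _ _
      _ = ∑ i, p i * (w i) ^ 2 := by
          have h1 : ∀ i, Real.sqrt (p i) ^ 2 = p i := fun i => Real.sq_sqrt (hp i)
          simp_rw [mul_pow, h1, sq_abs, hsum, one_mul]
  · intro hf
    set F := ∑ j, |f j| with hF
    have hFpos : 0 < F := by
      have : ∃ i, f i ≠ 0 := by
        by_contra h
        push_neg at h
        exact hf (funext h)
      obtain ⟨i, hi⟩ := this
      exact Finset.sum_pos' (fun j _ => abs_nonneg _)
        ⟨i, Finset.mem_univ i, abs_pos.mpr hi⟩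
    have hFne : F ≠ 0 := hFpos.ne'
    refine ⟨fun i => div_nonneg (abs_nonneg _) hFpos.le, ?_, ?_, ?_⟩
    · rw [← Finset.sum_div, div_self hFne]
    · intro i
      field_simp
      rw [mul_comm, sign_mul_abs']
    · have : ∀ i, (|f i| / F) * (Real.sign (f i) * F) ^ 2 = |f i| * F := by
        intro i
        rw [mul_pow]
        field_simp
        exact abs_mul_sign_sq (f i)
      simp_rw [this, ← Finset.sum_mul, sq]
      rfl
end

section
/- Let n ≥ 1 and let N be a seminorm on the space of n × n complex matrices viewed as a real vector space. Let d ≥ 1, let ψ : Fin d → ℂⁿ be a family of vectors, α : Fin d → ℂ coefficients, and x = Σ_a α_a • ψ_a. Then N(x x*) ≤ Σ_a |α_a|² · N(ψ_a ψ_a*) + Σ_{a < b} ( |Re(α_a · conj(α_b))| · N(ψ_a ψ_b* + ψ_b ψ_a*) + |Im(α_a · conj(α_b))| · N(i • (ψ_a ψ_b*) − i • (ψ_b ψ_a*)) ). -/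
open Finset

/-- The outer product `u v*` of two vectors, with entries `u j * conj (v k)`. -/
noncomputable def outerProd {k : Type*} [Fintype k] (u v : k → ℂ) : Matrix k k ℂ :=
  Matrix.vecMulVec u (star v)

lemma key_scalar (c m m' : ℂ) :
    c * m + (starRingEnd ℂ) c * m' =
      (c.re : ℂ) * (m + m') + (c.im : ℂ) * (Complex.I * m - Complex.I * m') := by
  have h1 : (starRingEnd ℂ) c = (c.re : ℂ) - c.im * Complex.I := by
    simp [Complex.ext_iff]
  linear_combination (-m) * (Complex.re_add_im c) + m' * h1

lemma key_matrix {n : ℕ} (c : ℂ) (M M' : Matrix (Fin n) (Fin n) ℂ) :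
    c • M + (starRingEnd ℂ) c • M' =
      c.re • (M + M') + c.im • (Complex.I • M - Complex.I • M') := by
  ext i j
  simp only [Matrix.add_apply, Matrix.smul_apply, Matrix.sub_apply, smul_eq_mul,
    Complex.real_smul]
  exact key_scalar c (M i j) (M' i j)

lemma sum_pairs {M : Type*} [AddCommMonoid M] (d : ℕ) (f : Fin d → Fin d → M) :
    ∑ a, ∑ b, f a b = (∑ a, f a a) + ∑ a, ∑ b ∈ Ioi a, (f a b + f b a) := by
  have h := Finset.sum_sum_Ioi_add_eq_sum_sum_off_diag (fun a b => f b a)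
  rw [h, ← Finset.sum_add_distrib]
  refine Finset.sum_congr rfl fun a _ => ?_
  classical
  rw [Fintype.sum_eq_add_sum_compl a (f a)]

lemma seminorm_sum_le {E ι : Type*} [AddCommGroup E] [Module ℝ E] (N : Seminorm ℝ E)
    (s : Finset ι) (f : ι → E) : N (∑ i ∈ s, f i) ≤ ∑ i ∈ s, N (f i) := by
  classical
  induction s using Finset.cons_induction with
  | empty => simp
  | cons a s ha ih =>
    rw [Finset.sum_cons, Finset.sum_cons]
    exact le_trans (map_add_le_add N _ _) (add_le_add le_rfl ih)

lemma outer_expand {n d : ℕ} (ψ : Fin d → (Fin n → ℂ)) (α : Fin d → ℂ) :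
    outerProd (∑ a, α a • ψ a) (∑ a, α a • ψ a) =
      ∑ a, ∑ b, (α a * (starRingEnd ℂ) (α b)) • outerProd (ψ a) (ψ b) := by
  ext i j
  simp only [outerProd, Matrix.vecMulVec_apply, Matrix.sum_apply, Matrix.smul_apply,
    Pi.star_apply, Finset.sum_apply, Pi.smul_apply, smul_eq_mul]
  rw [star_sum, Finset.sum_mul_sum]
  refine Finset.sum_congr rfl fun a _ => Finset.sum_congr rfl fun b _ => ?_
  simp only [star_mul', starRingEnd_apply]
  ring

/-- 'If' direction of Lemma 2: a seminorm bound on the projector onto a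
superposition `x = ∑ a, α a • ψ a` in terms of the seminorms of the Hermitian
matrix units built from the basis vectors. -/
theorem stmt4 (n : ℕ) (hn : 1 ≤ n)
    (N : Seminorm ℝ (Matrix (Fin n) (Fin n) ℂ))
    (d : ℕ) (hd : 1 ≤ d) (ψ : Fin d → (Fin n → ℂ)) (α : Fin d → ℂ)
    (x : Fin n → ℂ) (hx : x = ∑ a, α a • ψ a) :
    N (outerProd x x) ≤
      (∑ a, ‖α a‖ ^ 2 * N (outerProd (ψ a) (ψ a))) +
      ∑ a, ∑ b ∈ Finset.Ioi a,
        (|(α a * (starRingEnd ℂ) (α b)).re| *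
            N (outerProd (ψ a) (ψ b) + outerProd (ψ b) (ψ a)) +
         |(α a * (starRingEnd ℂ) (α b)).im| *
            N (Complex.I • outerProd (ψ a) (ψ b)
               - Complex.I • outerProd (ψ b) (ψ a))) := by
  subst hx
  rw [outer_expand, sum_pairs]
  refine le_trans (map_add_le_add N _ _) (add_le_add ?_ ?_)
  · refine le_trans (seminorm_sum_le N _ _) (Finset.sum_le_sum fun a _ => ?_)
    have : (α a * (starRingEnd ℂ) (α a)) • outerProd (ψ a) (ψ a)
        = (‖α a‖ ^ 2 : ℝ) • outerProd (ψ a) (ψ a) := by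
      rw [Complex.mul_conj]
      ext i j
      simp [Complex.real_smul, Complex.sq_norm]
    rw [this, map_smul_eq_mul]
    simp [abs_of_nonneg]
  · refine le_trans (seminorm_sum_le N _ _) (Finset.sum_le_sum fun a _ => ?_)
    refine le_trans (seminorm_sum_le N _ _) (Finset.sum_le_sum fun b hb => ?_)
    have hconj : α b * (starRingEnd ℂ) (α a)
        = (starRingEnd ℂ) (α a * (starRingEnd ℂ) (α b)) := by
      simp [mul_comm]
    rw [hconj, key_matrix]
    refine le_trans (map_add_le_add N _ _) (add_le_add ?_ ?_) <;>
      rw [map_smul_eq_mul] <;> exact le_refl _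
end

section
/- Fix m ≥ 1. Let σ = (1/2) • (σ₀ + (1/√3) • (σ₁ + σ₂ + σ₃)) be the single-qubit magic state density matrix, and let Σ_m = σ ⊗ ⋯ ⊗ σ be its m-fold Kronecker product, a matrix indexed by (Fin m → Fin 2). Then Σ_{s : Fin m → Fin 4} |trace(P(s) * Σ_m)| = (1 + √3)^m. Consequently, for the traceless part Õ = Σ_m − 2^{−m} • 1, we have 2^{1−m} · Σ_{s : Fin m → Fin 4} |trace(P(s) * Õ)| = 2^{1−m} · ((1 + √3)^m − 1). -/
open Finset

/-- The single-qubit Pauli matrices `σ₀ = I, σ₁ = X, σ₂ = Y, σ₃ = Z`. -/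
noncomputable def pauli : Fin 4 → Matrix (Fin 2) (Fin 2) ℂ
  | 0 => 1
  | 1 => !![0, 1; 1, 0]
  | 2 => !![0, -Complex.I; Complex.I, 0]
  | 3 => !![1, 0; 0, -1]

/-- The `m`-fold Kronecker product `σ_{s 0} ⊗ ⋯ ⊗ σ_{s (m-1)}` of Pauli
matrices, as a matrix indexed by `Fin m → Fin 2`. -/
noncomputable def pauliString {m : ℕ} (s : Fin m → Fin 4) :
    Matrix (Fin m → Fin 2) (Fin m → Fin 2) ℂ :=
  fun x y => ∏ i, pauli (s i) (x i) (y i)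

/-- The single-qubit magic state density matrix
`σ = (I + (X + Y + Z)/√3) / 2`. -/
noncomputable def magicState : Matrix (Fin 2) (Fin 2) ℂ :=
  ((1 : ℂ) / 2) • (pauli 0 +
    (((Real.sqrt 3)⁻¹ : ℝ) : ℂ) • (pauli 1 + pauli 2 + pauli 3))

/-- The `m`-fold Kronecker product of the magic state with itself, as a
matrix indexed by `Fin m → Fin 2`. -/
noncomputable def magicStateM (m : ℕ) :
    Matrix (Fin m → Fin 2) (Fin m → Fin 2) ℂ :=
  fun x y => ∏ i, magicState (x i) (y i)

lemma trace_kron {m : ℕ} (A : Fin m → Matrix (Fin 2) (Fin 2) ℂ) :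
    Matrix.trace (Matrix.of fun (x y : Fin m → Fin 2) => ∏ i, A i (x i) (y i)) =
      ∏ i, (A i).trace := by
  classical
  simp only [Matrix.trace, Matrix.diag, Matrix.of_apply]
  exact (Fintype.prod_sum fun i a => A i a a).symm

lemma trace_kron_mul {m : ℕ} (A B : Fin m → Matrix (Fin 2) (Fin 2) ℂ) :
    Matrix.trace ((Matrix.of fun (x y : Fin m → Fin 2) => ∏ i, A i (x i) (y i)) *
        (Matrix.of fun (x y : Fin m → Fin 2) => ∏ i, B i (x i) (y i))) =
      ∏ i, (A i * B i).trace := by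
  classical
  have h : ∀ i, (A i * B i).trace = ∑ p : Fin 2 × Fin 2, A i p.1 p.2 * B i p.2 p.1 := by
    intro i
    simp [Matrix.trace, Matrix.diag, Matrix.mul_apply, Fintype.sum_prod_type]
  simp only [h]
  rw [Fintype.prod_sum (fun i (p : Fin 2 × Fin 2) => A i p.1 p.2 * B i p.2 p.1)]
  rw [← Equiv.sum_comp (Equiv.arrowProdEquivProdArrow (Fin m) (fun _ => Fin 2) (fun _ => Fin 2)).symm
    (fun z => ∏ i, A i (z i).1 (z i).2 * B i (z i).2 (z i).1)]
  rw [Fintype.sum_prod_type]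
  simp [Matrix.trace, Matrix.diag, Matrix.mul_apply, Equiv.arrowProdEquivProdArrow,
    Finset.prod_mul_distrib]

lemma trace_pauli_magic (k : Fin 4) :
    (pauli k * magicState).trace = if k = 0 then 1 else (((Real.sqrt 3)⁻¹ : ℝ) : ℂ) := by
  fin_cases k
  · simp [pauli, magicState, Matrix.trace, Matrix.mul_apply, Fin.sum_univ_two,
      Matrix.one_apply, Matrix.diag]
    ring
  · simp only [show (⟨1, by norm_num⟩ : Fin 4) ≠ 0 from by decide, if_neg, if_false]
    simp [pauli, magicState, Matrix.trace, Matrix.mul_apply, Fin.sum_univ_two,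
      Matrix.one_apply, Matrix.diag]
    ring
  · simp only [show (⟨2, by norm_num⟩ : Fin 4) ≠ 0 from by decide, if_neg, if_false]
    simp [pauli, magicState, Matrix.trace, Matrix.mul_apply, Fin.sum_univ_two,
      Matrix.one_apply, Matrix.diag]
    ring_nf
    rw [Complex.I_sq]; ring
  · simp only [show (⟨3, by norm_num⟩ : Fin 4) ≠ 0 from by decide, if_neg, if_false]
    simp [pauli, magicState, Matrix.trace, Matrix.mul_apply, Fin.sum_univ_two,
      Matrix.one_apply, Matrix.diag]
    ring

lemma trace_pauli (k : Fin 4) :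
    (pauli k).trace = if k = 0 then 2 else 0 := by
  fin_cases k <;> simp [pauli, Matrix.trace, Fin.sum_univ_two, Matrix.diag] <;> decide

/-- The absolute values of the single-qubit trace overlaps. -/
noncomputable def ccoef : Fin 4 → ℝ := fun k => if k = 0 then 1 else (Real.sqrt 3)⁻¹

lemma abs_trace_pauli_magic (k : Fin 4) :
    ‖(pauli k * magicState).trace‖ = ccoef k := by
  rw [trace_pauli_magic, ccoef]
  by_cases h : k = 0 <;> simp [h, abs_of_nonneg, Real.sqrt_nonneg]

lemma sum_ccoef : ∑ k : Fin 4, ccoef k = 1 + Real.sqrt 3 := by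
  have h3 : Real.sqrt 3 * Real.sqrt 3 = 3 := Real.mul_self_sqrt (by norm_num)
  have hne : Real.sqrt 3 ≠ 0 := by positivity
  have e0 : ccoef 0 = 1 := if_pos rfl
  have e1 : ccoef 1 = (Real.sqrt 3)⁻¹ := if_neg (by decide)
  have e2 : ccoef 2 = (Real.sqrt 3)⁻¹ := if_neg (by decide)
  have e3 : ccoef 3 = (Real.sqrt 3)⁻¹ := if_neg (by decide)
  rw [Fin.sum_univ_four, e0, e1, e2, e3]
  field_simp
  nlinarith [h3]

lemma trace_pauliString_mul {m : ℕ} (s : Fin m → Fin 4) :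
    (pauliString s * magicStateM m).trace =
      ∏ i, (pauli (s i) * magicState).trace :=
  trace_kron_mul (fun i => pauli (s i)) (fun _ => magicState)

lemma trace_pauliString {m : ℕ} (s : Fin m → Fin 4) :
    (pauliString s).trace = ∏ i, (pauli (s i)).trace :=
  trace_kron (fun i => pauli (s i))

lemma sum_abs_trace {m : ℕ} :
    (∑ s : Fin m → Fin 4, ‖(pauliString s * magicStateM m).trace‖)
      = (1 + Real.sqrt 3) ^ m := by
  classical
  have h : ∀ s : Fin m → Fin 4,
      ‖(pauliString s * magicStateM m).trace‖ = ∏ i, ccoef (s i) := by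
    intro s
    rw [trace_pauliString_mul, norm_prod]
    exact Finset.prod_congr rfl fun i _ => abs_trace_pauli_magic (s i)
  simp only [h]
  rw [← Fintype.prod_sum (fun (_ : Fin m) (k : Fin 4) => ccoef k)]
  simp [sum_ccoef]

/-- The Pauli DFE cost of the `m`-fold tensor product of magic states:
`∑_P |tr(P Σ_m)| = (1 + √3)^m`, hence the cost of the traceless part is
`2^{1-m}((1 + √3)^m − 1)`, exponentially large in `m`. -/
theorem stmt8 (m : ℕ) (hm : 1 ≤ m) :
    (∑ s : Fin m → Fin 4, ‖(pauliString s * magicStateM m).trace‖)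
        = (1 + Real.sqrt 3) ^ m ∧
    (2 : ℝ) ^ ((1 : ℤ) - m) *
      (∑ s : Fin m → Fin 4, ‖
        ((pauliString s *
            (magicStateM m - (((2 : ℂ) ^ m)⁻¹) •
              (1 : Matrix (Fin m → Fin 2) (Fin m → Fin 2) ℂ))).trace)‖)
      = (2 : ℝ) ^ ((1 : ℤ) - m) * ((1 + Real.sqrt 3) ^ m - 1) := by
  classical
  refine ⟨sum_abs_trace, ?_⟩
  congr 1
  -- the term-by-term trace of the traceless part
  set f : (Fin m → Fin 4) → ℝ :=
    fun s => ‖(pauliString s * magicStateM m).trace‖ with hf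
  set g : (Fin m → Fin 4) → ℝ :=
    fun s => ‖(pauliString s *
      (magicStateM m - (((2 : ℂ) ^ m)⁻¹) •
        (1 : Matrix (Fin m → Fin 2) (Fin m → Fin 2) ℂ))).trace‖ with hg
  have htr : ∀ s, (pauliString s *
      (magicStateM m - (((2 : ℂ) ^ m)⁻¹) •
        (1 : Matrix (Fin m → Fin 2) (Fin m → Fin 2) ℂ))).trace
      = (pauliString s * magicStateM m).trace
        - ((2 : ℂ) ^ m)⁻¹ * (pauliString s).trace := by
    intro s
    rw [Matrix.mul_sub, Matrix.mul_smul, Matrix.mul_one, Matrix.trace_sub,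
      Matrix.trace_smul, smul_eq_mul]
  have hz : (fun _ => (0 : Fin 4)) ∈ (Finset.univ : Finset (Fin m → Fin 4)) :=
    Finset.mem_univ _
  -- value at the all-identity string
  have hg0 : g (fun _ => 0) = 0 := by
    have h1 : (pauliString (fun _ : Fin m => (0 : Fin 4)) * magicStateM m).trace = 1 := by
      rw [trace_pauliString_mul]
      simp [trace_pauli_magic]
    have h2 : (pauliString (fun _ : Fin m => (0 : Fin 4))).trace = 2 ^ m := by
      rw [trace_pauliString]
      simp [trace_pauli]
    simp [hg, htr, h1, h2, inv_mul_cancel₀ (pow_ne_zero m (two_ne_zero (α := ℂ)))]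
  have hf0 : f (fun _ => 0) = 1 := by
    have h1 : (pauliString (fun _ : Fin m => (0 : Fin 4)) * magicStateM m).trace = 1 := by
      rw [trace_pauliString_mul]
      simp [trace_pauli_magic]
    simp [hf, h1]
  -- away from the all-identity string, the Pauli string is traceless
  have hfg : ∀ s ∈ Finset.univ.erase (fun _ : Fin m => (0 : Fin 4)), g s = f s := by
    intro s hs
    have hsne : s ≠ fun _ => 0 := (Finset.mem_erase.mp hs).1
    obtain ⟨i, hi⟩ : ∃ i, s i ≠ 0 := by
      by_contra h
      push_neg at h
      exact hsne (funext h)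
    have hz : (pauliString s).trace = 0 := by
      rw [trace_pauliString]
      exact Finset.prod_eq_zero (Finset.mem_univ i) (by simp [trace_pauli, hi])
    simp [hg, hf, htr, hz]
  have key : ∑ s : Fin m → Fin 4, g s = (∑ s : Fin m → Fin 4, f s) - 1 := by
    rw [← Finset.add_sum_erase _ g hz, ← Finset.add_sum_erase _ f hz, hg0, hf0,
      Finset.sum_congr rfl hfg]
    ring
  rw [key, sum_abs_trace]
end

section
/- Let H be a real inner product space and let a, b ∈ H with ⟪a, b⟫ ≤ 0. Set t = ‖b‖² / (‖a‖² + ‖b‖²) (assuming ‖a‖² + ‖b‖² > 0) and c = t • a + (1 − t) • b. Then ‖c‖² ≤ ‖a‖² · ‖b‖² / (‖a‖² + ‖b‖²); in particular, if a ≠ 0, b ≠ 0, and c ≠ 0, then 1/‖c‖² ≥ 1/‖a‖² + 1/‖b‖². -/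
open scoped RealInnerProductSpace

/-- One-step estimate in the iterative construction of Theorem 2: if
`⟪a, b⟫ ≤ 0`, the convex combination `c = t • a + (1 − t) • b` with
`t = ‖b‖² / (‖a‖² + ‖b‖²)` satisfies `‖c‖² ≤ ‖a‖²‖b‖²/(‖a‖² + ‖b‖²)`, so
`1/‖c‖² ≥ 1/‖a‖² + 1/‖b‖²`. -/
theorem stmt10 {H : Type*} [NormedAddCommGroup H] [InnerProductSpace ℝ H]
    (a b : H) (hab : ⟪a, b⟫ ≤ 0)
    (hpos : 0 < ‖a‖ ^ 2 + ‖b‖ ^ 2)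
    (t : ℝ) (ht : t = ‖b‖ ^ 2 / (‖a‖ ^ 2 + ‖b‖ ^ 2))
    (c : H) (hc : c = t • a + (1 - t) • b) :
    ‖c‖ ^ 2 ≤ ‖a‖ ^ 2 * ‖b‖ ^ 2 / (‖a‖ ^ 2 + ‖b‖ ^ 2) ∧
    (a ≠ 0 → b ≠ 0 → c ≠ 0 →
      1 / ‖a‖ ^ 2 + 1 / ‖b‖ ^ 2 ≤ 1 / ‖c‖ ^ 2) := by
  set A := ‖a‖ ^ 2 with hA
  set B := ‖b‖ ^ 2 with hB
  have hA0 : 0 ≤ A := sq_nonneg _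
  have hB0 : 0 ≤ B := sq_nonneg _
  have ht0 : 0 ≤ t := by rw [ht]; positivity
  have ht1 : t ≤ 1 := by
    rw [ht]; rw [div_le_one hpos]; linarith
  have key : ‖c‖ ^ 2 = t ^ 2 * A + 2 * (t * (1 - t)) * ⟪a, b⟫ + (1 - t) ^ 2 * B := by
    rw [hc, norm_add_sq_real, norm_smul, norm_smul, real_inner_smul_left,
      real_inner_smul_right, hA, hB]
    have h1 : |t| = t := abs_of_nonneg ht0
    have h2 : |1 - t| = 1 - t := abs_of_nonneg (by linarith)
    simp only [Real.norm_eq_abs, h1, h2]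
    ring
  have hkey2 : ‖c‖ ^ 2 ≤ t ^ 2 * A + (1 - t) ^ 2 * B := by
    rw [key]
    nlinarith [mul_nonneg ht0 (by linarith : (0:ℝ) ≤ 1 - t)]
  have hmain : ‖c‖ ^ 2 ≤ A * B / (A + B) := by
    refine hkey2.trans (le_of_eq ?_)
    rw [ht]
    field_simp
    ring
  refine ⟨hmain, fun ha hb hcne => ?_⟩
  have hApos : 0 < A := by
    rw [hA]; exact pow_pos (norm_pos_iff.mpr ha) 2
  have hBpos : 0 < B := by
    rw [hB]; exact pow_pos (norm_pos_iff.mpr hb) 2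
  have hCpos : 0 < ‖c‖ ^ 2 := pow_pos (norm_pos_iff.mpr hcne) 2
  have hABpos : 0 < A * B / (A + B) := by positivity
  rw [div_add_div _ _ (ne_of_gt hApos) (ne_of_gt hBpos), div_le_div_iff₀ (by positivity) hCpos]
  have h := (le_div_iff₀ hpos).mp hmain
  nlinarith
end

section
/- Let H be a real inner product space, B > 0, and Δ : ℕ → H a sequence with 0 < ‖Δ n‖ ≤ B for all n ≥ 1. Define ς : ℕ → H by ς 1 = Δ 1 and ς (n+1) = t_n • Δ (n+1) + (1 − t_n) • ς n, where t_n = ‖ς n‖² / (‖Δ (n+1)‖² + ‖ς n‖²). If ⟪ς n, Δ (n+1)⟫ ≤ 0 for all n ≥ 1, then ‖ς n‖² ≤ B² / n for every n ≥ 1. -/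
open scoped RealInnerProductSpace

/-- Inductive decay bound in the proof of Theorem 2: the deviations `ς n` of
the iteratively constructed measurement ensemble satisfy `‖ς n‖² ≤ B²/n`. -/
theorem stmt11 {H : Type*} [NormedAddCommGroup H] [InnerProductSpace ℝ H]
    (B : ℝ) (hB : 0 < B) (Δ : ℕ → H)
    (hΔ : ∀ n : ℕ, 1 ≤ n → 0 < ‖Δ n‖ ∧ ‖Δ n‖ ≤ B)
    (ς : ℕ → H) (h1 : ς 1 = Δ 1)
    (hrec : ∀ n : ℕ, 1 ≤ n →
      ς (n + 1) = (‖ς n‖ ^ 2 / (‖Δ (n + 1)‖ ^ 2 + ‖ς n‖ ^ 2)) • Δ (n + 1) +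
        (1 - ‖ς n‖ ^ 2 / (‖Δ (n + 1)‖ ^ 2 + ‖ς n‖ ^ 2)) • ς n)
    (hip : ∀ n : ℕ, 1 ≤ n → ⟪ς n, Δ (n + 1)⟫ ≤ 0) :
    ∀ n : ℕ, 1 ≤ n → ‖ς n‖ ^ 2 ≤ B ^ 2 / n := by
  intro n hn
  induction n, hn using Nat.le_induction with
  | base =>
    rw [h1]
    simp only [Nat.cast_one, div_one]
    exact pow_le_pow_left₀ (norm_nonneg _) (hΔ 1 le_rfl).2 2
  | succ n hn ih =>
    have hΔn := hΔ (n + 1) (by omega)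
    set a := ‖Δ (n + 1)‖ ^ 2 with ha
    set s := ‖ς n‖ ^ 2 with hs
    have ha0 : 0 < a := pow_pos hΔn.1 2
    have hs0 : 0 ≤ s := by positivity
    have hden : 0 < a + s := by linarith
    set t : ℝ := s / (a + s) with ht
    have ht0 : 0 ≤ t := div_nonneg hs0 hden.le
    have ht1 : t ≤ 1 := by
      rw [ht, div_le_one hden]; linarith
    have hnpos : (0 : ℝ) < n := by exact_mod_cast hn
    have hsn : s * n ≤ B ^ 2 := by
      rw [← le_div_iff₀ hnpos]; exact ih
    have haB : a ≤ B ^ 2 := pow_le_pow_left₀ (norm_nonneg _) hΔn.2 2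
    have hipn := hip n hn
    have hnorm : ‖ς (n + 1)‖ ^ 2 ≤ t ^ 2 * a + (1 - t) ^ 2 * s := by
      rw [hrec n hn]
      rw [norm_add_sq_real, real_inner_smul_left, real_inner_smul_right,
        norm_smul, norm_smul, mul_pow, mul_pow]
      have hinner : t * ((1 - t) * ⟪Δ (n + 1), ς n⟫) ≤ 0 := by
        have : ⟪Δ (n + 1), ς n⟫ ≤ 0 := by rwa [real_inner_comm]
        have h1t : 0 ≤ 1 - t := by linarith
        exact mul_nonpos_of_nonneg_of_nonpos ht0
          (mul_nonpos_of_nonneg_of_nonpos h1t this)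
      have hat : ‖t‖ ^ 2 = t ^ 2 := by
        rw [Real.norm_eq_abs, sq_abs]
      have hbt : ‖1 - t‖ ^ 2 = (1 - t) ^ 2 := by
        rw [Real.norm_eq_abs, sq_abs]
      rw [hat, hbt]
      nlinarith [hinner]
    have heq : t ^ 2 * a + (1 - t) ^ 2 * s = a * s / (a + s) := by
      rw [ht]; field_simp; ring
    have hfinal : a * s / (a + s) ≤ B ^ 2 / (n + 1 : ℕ) := by
      push_cast
      rw [div_le_div_iff₀ hden (by linarith)]
      nlinarith [mul_le_mul_of_nonneg_left hsn ha0.le,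
        mul_le_mul_of_nonneg_right haB hs0]
    calc ‖ς (n + 1)‖ ^ 2 ≤ t ^ 2 * a + (1 - t) ^ 2 * s := hnorm
      _ = a * s / (a + s) := heq
      _ ≤ B ^ 2 / (n + 1 : ℕ) := hfinal
end

section
/- Let H be a finite-dimensional real inner product space, let x ∈ H with x ≠ 0, let S ⊆ H be a nonempty bounded set, and let y > 0. Assume that for every w ∈ H with ⟪w, x⟫ = 0 there exists u ∈ S with ⟪u, w⟫ ≤ 0 and ⟪u, x⟫ ≥ y. Then there exist a real number t with t ≥ y / ‖x‖² and a point z in the closure of the convex hull of S such that z = t • x. -/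
open scoped RealInnerProductSpace

/-- Abstract form of Theorem 2 on the measurement contrast: if every direction
`w` orthogonal to the target `x` admits an available measurement `u ∈ S` with
`⟪u, w⟫ ≤ 0` and `⟪u, x⟫ ≥ y`, then some multiple `t • x` with `t ≥ y/‖x‖²`
lies in the closed convex hull of `S`. -/
theorem stmt12 {H : Type*} [NormedAddCommGroup H] [InnerProductSpace ℝ H]
    [FiniteDimensional ℝ H]
    (x : H) (hx : x ≠ 0) (S : Set H) (hS : S.Nonempty)
    (hSb : Bornology.IsBounded S) (y : ℝ) (hy : 0 < y)
    (h : ∀ w : H, ⟪w, x⟫ = 0 → ∃ u ∈ S, ⟪u, w⟫ ≤ 0 ∧ y ≤ ⟪u, x⟫) :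
    ∃ t : ℝ, y / ‖x‖ ^ 2 ≤ t ∧ t • x ∈ closure (convexHull ℝ S) := by
  by_contra hcon
  push_neg at hcon
  have hx2 : (0:ℝ) < ‖x‖ ^ 2 := by
    have := norm_pos_iff.mpr hx
    positivity
  set t₀ : ℝ := y / ‖x‖ ^ 2 with ht₀
  have ht₀pos : 0 < t₀ := div_pos hy hx2
  set K : Set H := closure (convexHull ℝ S) with hK
  have hKconv : Convex ℝ K := (convex_convexHull ℝ S).closure
  have hKcomp : IsCompact K :=
    Metric.isCompact_of_isClosed_isBounded isClosed_closure (isBounded_convexHull.mpr hSb).closure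
  -- the ray
  set P : Set H := (fun t : ℝ => t • x) '' Set.Ici t₀ with hP
  have hPconv : Convex ℝ P := by
    rintro p ⟨s, hs, rfl⟩ q ⟨r, hr, rfl⟩ a b ha hb hab
    refine ⟨a * s + b * r, ?_, by simp [add_smul, mul_smul]⟩
    have h1 : a * t₀ + b * t₀ ≤ a * s + b * r := by
      gcongr <;> assumption
    have h2 : a * t₀ + b * t₀ = t₀ := by rw [← add_mul, hab, one_mul]
    have hs' := Set.mem_Ici.mp hs
    have hr' := Set.mem_Ici.mp hr
    simp only [Set.mem_Ici]
    nlinarith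
  have hPclosed : IsClosed P := by
    have hinj : Function.Injective (LinearMap.toSpanSingleton ℝ H x) := by
      intro a b hab
      exact smul_left_injective ℝ hx (by simpa using hab)
    have := (LinearMap.toSpanSingleton ℝ H x).isClosedEmbedding_of_injective
      (LinearMap.ker_eq_bot.mpr hinj)
    exact this.isClosedMap _ isClosed_Ici
  have hdisj : Disjoint K P := by
    rw [Set.disjoint_right]
    rintro p ⟨t, ht, rfl⟩ hpK
    exact hcon t ht hpK
  obtain ⟨f, a, b, hfa, hab, hfb⟩ :=
    geometric_hahn_banach_compact_closed hKconv hKcomp hPconv hPclosed hdisj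
  set w : H := (InnerProductSpace.toDual ℝ H).symm f with hw
  have hfw : ∀ v : H, f v = ⟪w, v⟫ := by
    intro v
    rw [hw, InnerProductSpace.toDual_symm_apply]
  set s : ℝ := ⟪w, x⟫ with hs
  have hray : ∀ t : ℝ, t₀ ≤ t → b < t * s := by
    intro t ht
    have := hfb (t • x) ⟨t, ht, rfl⟩
    rwa [hfw, real_inner_smul_right] at this
  have hs0 : 0 ≤ s := by
    by_contra hneg
    push_neg at hneg
    have ht : t₀ ≤ max t₀ (b / s + 1) := le_max_left _ _
    have h1 : b / s + 1 ≤ max t₀ (b / s + 1) := le_max_right _ _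
    have h2 : b < max t₀ (b / s + 1) * s := hray _ ht
    have h3 : max t₀ (b / s + 1) * s < (b / s) * s := by
      have : b / s < max t₀ (b / s + 1) := lt_of_lt_of_le (by linarith) h1
      exact (mul_lt_mul_right_of_neg hneg).mpr this
    rw [div_mul_cancel₀ _ (ne_of_lt hneg)] at h3
    linarith
  -- orthogonal direction
  have horth : ⟪(s / ‖x‖ ^ 2) • x - w, x⟫ = 0 := by
    rw [inner_sub_left, real_inner_smul_left, real_inner_self_eq_norm_sq]
    field_simp
    exact sub_eq_zero.mpr hs
  obtain ⟨u, huS, huw, hux⟩ := h _ horth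
  have huK : u ∈ K := subset_closure (subset_convexHull ℝ S huS)
  have hfu : f u < a := hfa u huK
  have hub : ⟪u, w⟫ ≥ s / ‖x‖ ^ 2 * ⟪u, x⟫ := by
    rw [inner_sub_right, real_inner_smul_right] at huw
    linarith
  have h4 : s / ‖x‖ ^ 2 * ⟪u, x⟫ ≥ s / ‖x‖ ^ 2 * y := by
    have : 0 ≤ s / ‖x‖ ^ 2 := div_nonneg hs0 hx2.le
    exact mul_le_mul_of_nonneg_left hux this
  have h5 : b < t₀ * s := hray t₀ le_rfl
  have h6 : f u = ⟪u, w⟫ := by rw [hfw, real_inner_comm]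
  have : s / ‖x‖ ^ 2 * y = t₀ * s := by rw [ht₀]; ring
  linarith
end

section
/- Let n ≥ 1 and let G be a finite subgroup of the group of n × n complex unitary matrices such that |G| = n, every element of G is Hermitian, and every element of G other than the identity has trace 0. Then σ := (1/n) • Σ_{g ∈ G} g satisfies: σ is Hermitian, σ * σ = σ, trace(σ) = 1, and there exists a unit vector u ∈ ℂⁿ with σ = u u*; moreover trace(g * σ) = 1 for every g ∈ G. -/
open Matrix Finset

/-- A Hermitian idempotent complex matrix of trace 1 is a rank-one projector
`u u*` for a unit vector `u`. -/
lemma herm_proj_trace_one_rank_one {n : ℕ} (P : Matrix (Fin n) (Fin n) ℂ)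
    (hH : P.IsHermitian) (h2 : P * P = P) (htr : P.trace = 1) :
    ∃ u : Fin n → ℂ, star u ⬝ᵥ u = 1 ∧ P = Matrix.vecMulVec u (star u) := by
  have hHe : ∀ i k, P k i = (starRingEnd ℂ) (P i k) := by
    intro i k
    have := congrFun (congrFun hH.symm k) i
    simpa [Matrix.conjTranspose_apply] using this
  -- find a nonzero diagonal entry
  have hex : ∃ j, P j j ≠ 0 := by
    by_contra h
    push_neg at h
    have : P.trace = 0 := by
      simp [Matrix.trace, Matrix.diag, h]
    rw [this] at htr; exact one_ne_zero htr.symm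
  obtain ⟨j, hj⟩ := hex
  set d : ℂ := P j j with hd
  set c : Fin n → ℂ := fun i => P i j with hc
  -- d is a sum of norm-squares
  have hdsum : d = ∑ i, (Complex.normSq (P i j) : ℂ) := by
    have : (P * P) j j = P j j := by rw [h2]
    rw [hd, ← this, Matrix.mul_apply]
    refine Finset.sum_congr rfl fun i _ => ?_
    rw [hHe i j, mul_comm, Complex.mul_conj]
  have hdre : d.re = ∑ i, Complex.normSq (P i j) := by
    rw [hdsum]; push_cast; simp
  have hdim : d.im = 0 := by
    rw [hdsum]; push_cast; simp
  have hdre_nonneg : 0 ≤ d.re := by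
    rw [hdre]; exact Finset.sum_nonneg fun i _ => Complex.normSq_nonneg _
  have hd_real : ((d.re : ℝ) : ℂ) = d := by
    apply Complex.ext <;> simp [hdim]
  -- the scaled rank-one candidate
  set R : Matrix (Fin n) (Fin n) ℂ :=
    Matrix.of (fun i k => d⁻¹ * (c i * (starRingEnd ℂ) (c k))) with hR
  have hstarc : ∀ i, (starRingEnd ℂ) (c i) * c i = (Complex.normSq (c i) : ℂ) := by
    intro i; rw [mul_comm, Complex.mul_conj]
  have hcc : ∑ l, (starRingEnd ℂ) (c l) * c l = d := by
    rw [hdsum]; exact Finset.sum_congr rfl fun l _ => hstarc l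
  -- P * R = R
  have hPc : ∀ i, ∑ l, P i l * c l = c i := by
    intro i
    have : (P * P) i j = P i j := by rw [h2]
    rw [← Matrix.mul_apply] ; exact this
  have hPR : P * R = R := by
    ext i k
    rw [Matrix.mul_apply]
    simp only [hR, Matrix.of_apply]
    have step : ∀ l, P i l * (d⁻¹ * (c l * (starRingEnd ℂ) (c k)))
        = d⁻¹ * (starRingEnd ℂ) (c k) * (P i l * c l) := fun l => by ring
    rw [Finset.sum_congr rfl fun l _ => step l, ← Finset.mul_sum, hPc]
    ring
  -- R * P = R
  have hcP : ∀ k, ∑ l, (starRingEnd ℂ) (c l) * P l k = (starRingEnd ℂ) (c k) := by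
    intro k
    have h1 : (P * P) j k = P j k := by rw [h2]
    rw [Matrix.mul_apply] at h1
    calc ∑ l, (starRingEnd ℂ) (c l) * P l k = ∑ l, P j l * P l k := by
          refine Finset.sum_congr rfl fun l _ => ?_
          show (starRingEnd ℂ) (P l j) * P l k = P j l * P l k
          rw [hHe l j]
      _ = P j k := h1
      _ = (starRingEnd ℂ) (c k) := hHe k j
  have hRP : R * P = R := by
    ext i k
    rw [Matrix.mul_apply]
    simp only [hR, Matrix.of_apply]
    have step : ∀ l, d⁻¹ * (c i * (starRingEnd ℂ) (c l)) * P l k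
        = d⁻¹ * c i * ((starRingEnd ℂ) (c l) * P l k) := fun l => by ring
    rw [Finset.sum_congr rfl fun l _ => step l, ← Finset.mul_sum, hcP]
    ring
  -- R * R = R
  have hRR : R * R = R := by
    ext i k
    rw [Matrix.mul_apply]
    simp only [hR, Matrix.of_apply]
    calc ∑ l, d⁻¹ * (c i * (starRingEnd ℂ) (c l)) * (d⁻¹ * (c l * (starRingEnd ℂ) (c k)))
        = d⁻¹ * d⁻¹ * (c i * (starRingEnd ℂ) (c k)) * ∑ l, (starRingEnd ℂ) (c l) * c l := by
          rw [Finset.mul_sum]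
          exact Finset.sum_congr rfl fun l _ => by ring
      _ = d⁻¹ * (c i * (starRingEnd ℂ) (c k)) := by
          rw [hcc]; field_simp
  -- trace R = 1
  have htrR : R.trace = 1 := by
    have : R.trace = d⁻¹ * ∑ i, (starRingEnd ℂ) (c i) * c i := by
      rw [Matrix.trace]
      simp only [Matrix.diag, hR, Matrix.of_apply, Finset.mul_sum]
      exact Finset.sum_congr rfl fun i _ => by ring
    rw [this, hcc]
    exact inv_mul_cancel₀ hj
  -- Q := P - R is a Hermitian idempotent with trace 0, hence 0
  set Q : Matrix (Fin n) (Fin n) ℂ := P - R with hQ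
  have hQ2 : Q * Q = Q := by
    rw [hQ, Matrix.sub_mul, Matrix.mul_sub, Matrix.mul_sub, h2, hPR, hRP, hRR]
    abel
  have hdconj : (starRingEnd ℂ) d = d := by
    rw [← hd_real]; simp
  have hQherm : ∀ i k, Q k i = (starRingEnd ℂ) (Q i k) := by
    intro i k
    simp only [hQ, Matrix.sub_apply, hR, Matrix.of_apply, map_sub, _root_.map_mul,
      map_inv₀]
    rw [hHe i k, hdconj, Complex.conj_conj]
    ring
  have htrQ : Q.trace = 0 := by
    rw [hQ, Matrix.trace_sub, htr, htrR, sub_self]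
  have hQdiag : ∀ i, Q i i = ∑ k, (Complex.normSq (Q k i) : ℂ) := by
    intro i
    have : (Q * Q) i i = Q i i := by rw [hQ2]
    rw [← this, Matrix.mul_apply]
    refine Finset.sum_congr rfl fun k _ => ?_
    rw [hQherm k i, mul_comm, Complex.mul_conj]
  have hQzero : Q = 0 := by
    have hsum : ∑ i, ∑ k, Complex.normSq (Q k i) = 0 := by
      have : (Q.trace : ℂ) = ∑ i, ∑ k, (Complex.normSq (Q k i) : ℂ) := by
        rw [Matrix.trace]
        exact Finset.sum_congr rfl fun i _ => hQdiag i
      rw [htrQ] at this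
      have := congrArg Complex.re this.symm
      simpa using this
    ext i k
    have h1 : ∀ i ∈ Finset.univ (α := Fin n), ∑ k, Complex.normSq (Q k i) = 0 := by
      intro i _
      have := (Finset.sum_eq_zero_iff_of_nonneg (fun i _ =>
        Finset.sum_nonneg fun k _ => Complex.normSq_nonneg _)).1 hsum i (Finset.mem_univ i)
      exact this
    have h2' := (Finset.sum_eq_zero_iff_of_nonneg (fun k _ =>
      Complex.normSq_nonneg _)).1 (h1 k (Finset.mem_univ k)) i (Finset.mem_univ i)
    simpa using Complex.normSq_eq_zero.1 h2'
  have hPR' : P = R := by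
    have := sub_eq_zero.1 (hQ ▸ hQzero : P - R = 0)
    exact this
  -- build the unit vector
  have hdre_pos : 0 < d.re := by
    rcases lt_or_eq_of_le hdre_nonneg with h | h
    · exact h
    · exfalso; apply hj; rw [← hd_real, ← h]; simp
  set t : ℝ := Real.sqrt d.re with htdef
  have ht_pos : 0 < t := Real.sqrt_pos.2 hdre_pos
  have ht2 : (t : ℂ) * (t : ℂ) = d := by
    rw [← hd_real]
    norm_cast
    exact Real.mul_self_sqrt hdre_nonneg
  refine ⟨fun i => (t : ℂ)⁻¹ * c i, ?_, ?_⟩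
  · -- unit norm
    have expand : ∀ i, (starRingEnd ℂ) ((t : ℂ)⁻¹ * c i) * ((t : ℂ)⁻¹ * c i)
        = ((t : ℂ) * (t : ℂ))⁻¹ * ((starRingEnd ℂ) (c i) * c i) := by
      intro i
      rw [_root_.map_mul, map_inv₀, Complex.conj_ofReal]
      ring
    simp only [dotProduct, Pi.star_apply, Complex.star_def]
    rw [Finset.sum_congr rfl fun i _ => expand i, ← Finset.mul_sum, hcc, ht2]
    exact inv_mul_cancel₀ hj
  · -- P = u u*
    rw [hPR']
    ext i k
    simp only [hR, Matrix.of_apply, Matrix.vecMulVec_apply, Pi.star_apply,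
      Complex.star_def, _root_.map_mul, map_inv₀, Complex.conj_ofReal]
    rw [← ht2]
    have htne : (t : ℂ) ≠ 0 := by
      exact_mod_cast ne_of_gt ht_pos
    field_simp

/-- Stabilizer-state structure (Corollary 2): if `G` is a finite subgroup of
the `n × n` unitary group with `|G| = n`, all elements Hermitian and all
non-identity elements traceless, then `σ = (1/n) ∑_{g ∈ G} g` is a rank-one
Hermitian projector of trace 1, and every `g ∈ G` has expectation 1 in `σ`. -/
theorem stmt13 (n : ℕ) (hn : 1 ≤ n)
    (G : Finset (Matrix (Fin n) (Fin n) ℂ))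
    (h_one : (1 : Matrix (Fin n) (Fin n) ℂ) ∈ G)
    (h_mul : ∀ g ∈ G, ∀ h ∈ G, g * h ∈ G)
    (h_unitary : ∀ g ∈ G, gᴴ * g = 1)
    (h_herm : ∀ g ∈ G, g.IsHermitian)
    (h_card : G.card = n)
    (h_tr : ∀ g ∈ G, g ≠ 1 → g.trace = 0) :
    ((n : ℂ)⁻¹ • ∑ g ∈ G, g).IsHermitian ∧
    ((n : ℂ)⁻¹ • ∑ g ∈ G, g) * ((n : ℂ)⁻¹ • ∑ g ∈ G, g)
      = (n : ℂ)⁻¹ • ∑ g ∈ G, g ∧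
    ((n : ℂ)⁻¹ • ∑ g ∈ G, g).trace = 1 ∧
    (∃ u : Fin n → ℂ, star u ⬝ᵥ u = 1 ∧
      (n : ℂ)⁻¹ • ∑ g ∈ G, g = Matrix.vecMulVec u (star u)) ∧
    (∀ g ∈ G, (g * ((n : ℂ)⁻¹ • ∑ g' ∈ G, g')).trace = 1) := by
  have hn0 : (n : ℂ) ≠ 0 := by
    exact_mod_cast Nat.cast_ne_zero.2 (by omega)
  -- each element squares to 1
  have hsq : ∀ g ∈ G, g * g = 1 := by
    intro g hg
    have := h_unitary g hg
    rwa [h_herm g hg] at this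
  -- left multiplication permutes the sum
  have hgsum : ∀ g ∈ G, ∑ g' ∈ G, g * g' = ∑ g' ∈ G, g' := by
    intro g hg
    have hinj : Set.InjOn (fun h => g * h) G := by
      intro a _ b _ hab
      have hab' : g * a = g * b := hab
      have : g * (g * a) = g * (g * b) := by rw [hab']
      rwa [← mul_assoc, ← mul_assoc, hsq g hg, one_mul, one_mul] at this
    have himg : G.image (fun h => g * h) = G := by
      apply Finset.eq_of_subset_of_card_le
      · intro x hx
        obtain ⟨a, ha, rfl⟩ := Finset.mem_image.1 hx
        exact h_mul g hg a ha
      · rw [Finset.card_image_of_injOn hinj]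
    calc ∑ g' ∈ G, g * g' = ∑ x ∈ G.image (fun h => g * h), x := by
          rw [Finset.sum_image (fun a ha b hb => hinj ha hb)]
      _ = ∑ g' ∈ G, g' := by rw [himg]
  -- σ absorbs every g
  have habs : ∀ g ∈ G, g * ((n : ℂ)⁻¹ • ∑ g' ∈ G, g') = (n : ℂ)⁻¹ • ∑ g' ∈ G, g' := by
    intro g hg
    rw [Matrix.mul_smul, Finset.mul_sum, hgsum g hg]
  -- Hermitian
  have hherm : ((n : ℂ)⁻¹ • ∑ g ∈ G, g).IsHermitian := by
    unfold Matrix.IsHermitian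
    rw [Matrix.conjTranspose_smul, Matrix.conjTranspose_sum]
    rw [Finset.sum_congr rfl fun g hg => h_herm g hg]
    congr 1
    simp
  -- idempotent
  have hidem : ((n : ℂ)⁻¹ • ∑ g ∈ G, g) * ((n : ℂ)⁻¹ • ∑ g ∈ G, g)
      = (n : ℂ)⁻¹ • ∑ g ∈ G, g := by
    rw [Matrix.smul_mul, Finset.sum_mul]
    rw [Finset.sum_congr rfl fun g hg => habs g hg]
    rw [Finset.sum_const, h_card, ← Nat.cast_smul_eq_nsmul ℂ, smul_smul,
      inv_mul_cancel₀ hn0, one_smul]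
  -- trace 1
  have htr1 : ((n : ℂ)⁻¹ • ∑ g ∈ G, g).trace = 1 := by
    rw [Matrix.trace_smul, Matrix.trace_sum]
    rw [Finset.sum_eq_single_of_mem 1 h_one (fun g hg hne => h_tr g hg hne)]
    rw [Matrix.trace_one]
    simp only [Fintype.card_fin, smul_eq_mul]
    exact inv_mul_cancel₀ hn0
  refine ⟨hherm, hidem, htr1, ?_, ?_⟩
  · exact herm_proj_trace_one_rank_one _ hherm hidem htr1
  · intro g hg
    rw [habs g hg, htr1]
end

section
/- Let n ≥ 1 and let G be a finite subgroup of the group of n × n complex unitary matrices with |G| = n, every element of G Hermitian, and every non-identity element of G traceless; put σ := (1/n) • Σ_{g ∈ G} g. Let B be a finite set of n × n Hermitian unitary matrices with the identity 1 ∈ B, |B| = n², G ⊆ B, and pairwise Hilbert–Schmidt orthogonality: trace(M * N) = 0 for all M ≠ N in B. Then trace(M * σ) = 0 for every M ∈ B \ G, and Σ_{M ∈ B, M ≠ 1} |trace(M * σ)| = n − 1. -/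
open Matrix Finset

/-- Pauli DFE cost of a stabilizer state (Corollary 2, Table 1): for a
stabilizer state `σ = (1/n) ∑_{g ∈ G} g` and an orthogonal basis `B` of `n²`
Hermitian unitaries containing `1` and `G`, every `M ∈ B \ G` has
`tr(M σ) = 0`, and `∑_{M ∈ B, M ≠ 1} |tr(M σ)| = n − 1`. -/
theorem stmt14 (n : ℕ) (hn : 1 ≤ n)
    (G : Finset (Matrix (Fin n) (Fin n) ℂ))
    (h_one : (1 : Matrix (Fin n) (Fin n) ℂ) ∈ G)
    (h_mul : ∀ g ∈ G, ∀ h ∈ G, g * h ∈ G)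
    (h_unitaryG : ∀ g ∈ G, gᴴ * g = 1)
    (h_hermG : ∀ g ∈ G, g.IsHermitian)
    (h_cardG : G.card = n)
    (h_trG : ∀ g ∈ G, g ≠ 1 → g.trace = 0)
    (B : Finset (Matrix (Fin n) (Fin n) ℂ))
    (h_oneB : (1 : Matrix (Fin n) (Fin n) ℂ) ∈ B)
    (h_cardB : B.card = n ^ 2)
    (h_sub : G ⊆ B)
    (h_hermB : ∀ M ∈ B, M.IsHermitian)
    (h_unitaryB : ∀ M ∈ B, Mᴴ * M = 1)
    (h_orth : ∀ M ∈ B, ∀ N ∈ B, M ≠ N → (M * N).trace = 0) :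
    (∀ M ∈ B, M ∉ G →
      (M * ((n : ℂ)⁻¹ • ∑ g ∈ G, g)).trace = 0) ∧
    (∑ M ∈ B.erase 1,
        ‖(M * ((n : ℂ)⁻¹ • ∑ g ∈ G, g)).trace‖) = n - 1 := by
  have hn0 : (n : ℂ) ≠ 0 := by exact_mod_cast Nat.one_le_iff_ne_zero.mp hn
  have key : ∀ M ∈ B, (M * ((n : ℂ)⁻¹ • ∑ g ∈ G, g)).trace
      = (n : ℂ)⁻¹ * ∑ g ∈ G, (M * g).trace := by
    intro M hM
    rw [Matrix.mul_smul, Matrix.trace_smul, Matrix.mul_sum, Matrix.trace_sum]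
    simp [smul_eq_mul]
  have part1 : ∀ M ∈ B, M ∉ G →
      (M * ((n : ℂ)⁻¹ • ∑ g ∈ G, g)).trace = 0 := by
    intro M hM hMG
    rw [key M hM]
    rw [Finset.sum_eq_zero, mul_zero]
    intro g hg
    exact h_orth M hM g (h_sub hg) (fun h => hMG (h ▸ hg))
  refine ⟨part1, ?_⟩
  have hGval : ∀ M ∈ G, (M * ((n : ℂ)⁻¹ • ∑ g ∈ G, g)).trace = 1 := by
    intro M hM
    rw [key M (h_sub hM)]
    rw [Finset.sum_eq_single M
      (fun g hg hne => h_orth M (h_sub hM) g (h_sub hg) (Ne.symm hne))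
      (fun h => absurd hM h)]
    have hMM : M * M = 1 := by nth_rewrite 1 [← (h_hermG M hM).eq]; exact h_unitaryG M hM
    rw [hMM, Matrix.trace_one]
    simp [Fintype.card_fin, inv_mul_cancel₀ hn0]
  have hsub' : G.erase 1 ⊆ B.erase 1 := Finset.erase_subset_erase _ h_sub
  rw [← Finset.sum_subset hsub' (by
    intro M hM hMG
    have hMB : M ∈ B := Finset.mem_of_mem_erase hM
    have hM1 : M ≠ 1 := Finset.ne_of_mem_erase hM
    have hMnG : M ∉ G := fun h => hMG (Finset.mem_erase.mpr ⟨hM1, h⟩)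
    rw [part1 M hMB hMnG]; simp)]
  have hones : ∑ M ∈ G.erase 1,
      ‖(M * ((n : ℂ)⁻¹ • ∑ g ∈ G, g)).trace‖ = ∑ _M ∈ G.erase 1, (1:ℝ) :=
    Finset.sum_congr rfl (fun M hM => by
      rw [hGval M (Finset.mem_of_mem_erase hM)]; simp)
  rw [hones, Finset.sum_const, Finset.card_erase_of_mem h_one, h_cardG]
  have : (1:ℝ) ≤ (n:ℝ) := by exact_mod_cast hn
  simp [nsmul_eq_mul]
  push_cast [Nat.cast_sub hn]
  ring
end

section
/- Let λ be a real number with 0 ≤ λ ≤ 1 and set t = √(λ(1−λ)). In ℂ², let e₀, e₁ be the standard basis, φ± = √λ • e₀ ± √(1−λ) • e₁, χ± = √λ • e₀ ± i√(1−λ) • e₁, x± = (1/√2) • (e₀ ± e₁), and y± = (1/√2) • (e₀ ± i • e₁). Let ψ = √λ • (e₀ ⊗ e₀) + √(1−λ) • (e₁ ⊗ e₁) ∈ ℂ² ⊗ ℂ². Define the 4 × 4 matrices (indexed by Fin 2 × Fin 2, with ⊗ the Kronecker product of matrices): M_z = (e₀e₀*) ⊗ (e₀e₀*) + (e₁e₁*)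 ⊗ (e₁e₁*); M_{x1} = (x₊x₊*) ⊗ (φ₊φ₊*) + (x₋x₋*) ⊗ (φ₋φ₋*); M_{x2} = (φ₊φ₊*) ⊗ (x₊x₊*) + (φ₋φ₋*) ⊗ (x₋x₋*); M_{y1} = (y₊y₊*) ⊗ (χ₋χ₋*) + (y₋y₋*) ⊗ (χ₊χ₊*); M_{y2} = (χ₋χ₋*) ⊗ (y₊y₊*) + (χ₊χ₊*) ⊗ (y₋y₋*). Then (1/6) • (2 • M_z + M_{x1} + M_{x2} + M_{y1} + M_{y2}) = (1/3) • (2 • (ψψ*) + 1), where 1 is the 4 × 4 identity matrix and ψψ* is the outer-product projector onto ψ. -/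
set_option maxHeartbeats 4000000


open Matrix
open scoped Kronecker

/-- LOCC DFE protocol for an arbitrary two-qubit pure state in Schmidt form
`ψ = √λ|00⟩ + √(1−λ)|11⟩`: the average of the five listed local measurement
operators equals `(2 ψψ* + I)/3`. -/
theorem stmt15 (lam : ℝ) (h0 : 0 ≤ lam) (h1 : lam ≤ 1) :
    let sl : ℂ := (Real.sqrt lam : ℝ)
    let sm : ℂ := (Real.sqrt (1 - lam) : ℝ)
    let e0 : Fin 2 → ℂ := ![1, 0]
    let e1 : Fin 2 → ℂ := ![0, 1]
    let φp := sl • e0 + sm • e1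
    let φm := sl • e0 - sm • e1
    let χp := sl • e0 + (Complex.I * sm) • e1
    let χm := sl • e0 - (Complex.I * sm) • e1
    let xp := ((Real.sqrt 2 : ℂ))⁻¹ • (e0 + e1)
    let xm := ((Real.sqrt 2 : ℂ))⁻¹ • (e0 - e1)
    let yp := ((Real.sqrt 2 : ℂ))⁻¹ • (e0 + Complex.I • e1)
    let ym := ((Real.sqrt 2 : ℂ))⁻¹ • (e0 - Complex.I • e1)
    let ψ : Fin 2 × Fin 2 → ℂ :=
      fun p => sl * (e0 p.1 * e0 p.2) + sm * (e1 p.1 * e1 p.2)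
    let Mz := outerProd e0 e0 ⊗ₖ outerProd e0 e0 + outerProd e1 e1 ⊗ₖ outerProd e1 e1
    let Mx1 := outerProd xp xp ⊗ₖ outerProd φp φp + outerProd xm xm ⊗ₖ outerProd φm φm
    let Mx2 := outerProd φp φp ⊗ₖ outerProd xp xp + outerProd φm φm ⊗ₖ outerProd xm xm
    let My1 := outerProd yp yp ⊗ₖ outerProd χm χm + outerProd ym ym ⊗ₖ outerProd χp χp
    let My2 := outerProd χm χm ⊗ₖ outerProd yp yp + outerProd χp χp ⊗ₖ outerProd ym ym
    ((1 : ℂ) / 6) • ((2 : ℂ) • Mz + Mx1 + Mx2 + My1 + My2) =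
      ((1 : ℂ) / 3) • ((2 : ℂ) • outerProd ψ ψ +
        (1 : Matrix (Fin 2 × Fin 2) (Fin 2 × Fin 2) ℂ)) := by
  intro sl sm e0 e1 φp φm χp χm xp xm yp ym ψ Mz Mx1 Mx2 My1 My2
  have hsum : ((Real.sqrt (1 - lam) : ℝ) : ℂ) ^ 2 = 1 - ((Real.sqrt lam : ℝ) : ℂ) ^ 2 := by
    rw [← Complex.ofReal_pow, ← Complex.ofReal_pow,
      Real.sq_sqrt (by linarith : (0:ℝ) ≤ 1 - lam), Real.sq_sqrt h0]
    push_cast; ring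
  have hs2 : ((Real.sqrt 2 : ℂ))⁻¹ ^ 2 = 2⁻¹ := by
    rw [inv_pow, ← Complex.ofReal_pow, Real.sq_sqrt (by norm_num : (0:ℝ) ≤ 2)]
    norm_num
  ext ⟨i, j⟩ ⟨k, l⟩
  fin_cases i <;> fin_cases j <;> fin_cases k <;> fin_cases l <;>
    simp only [Mz, Mx1, Mx2, My1, My2, ψ, φp, φm, χp, χm, xp, xm, yp, ym, e0, e1,
      outerProd, Matrix.vecMulVec_apply, Matrix.kroneckerMap_apply, Matrix.add_apply,
      Matrix.smul_apply, Matrix.one_apply, Pi.star_apply, Pi.add_apply, Pi.sub_apply,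
      Pi.smul_apply, smul_eq_mul, Matrix.cons_val_zero, Matrix.cons_val_one,
      Matrix.head_cons, star_add, star_sub, star_mul', Complex.star_def,
      Complex.conj_ofReal, Complex.conj_I, _root_.map_one, _root_.map_zero, sl, sm] <;>
    simp only [Prod.mk.injEq, and_self, if_true, if_false, reduceCtorEq, and_false,
      false_and] <;>
    (try ring_nf) <;>
    (try simp only [hs2, hsum, Complex.I_sq]) <;>
    (try ring_nf) <;>
    (try norm_num) <;>
    (try ring) <;>
    (try simp only [hs2, hsum, Complex.I_sq]) <;>
    (try ring_nf) <;>
    (try norm_num) <;>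
    (try ring)
end
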